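/- For every q with 0 ≤ q ≤ dim K − 1, both i and −i are eigenvalues of the up-Grover walk U_q^up on ℓ²(E(X_q)); and for every q with 1 ≤ q ≤ dim K, both i and −i are eigenvalues of the down-Grover walk U_q^down on ℓ²(E(Y_q)). -/
import Mathlib


open scoped BigOperators

/-- The set of oriented `q`-simplices of a simplicial complex, together with the
orientation-reversal involution `bar` (writing `τ̄` for `bar τ`). -/
structure OrientedSet where
  K : Type
  bar : K → K
  bar_invol : ∀ τ, bar (bar τ) = τ
  bar_ne : ∀ τ, bar τ ≠ τ

/-- The data of an up graph (`mult = 2(q+1)`) or a down graph (`mult = 2`) on the set of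
oriented `q`-simplices: the sign function `η` (extended by `0` off the edge set, so that
`(τ₁, τ₂)` is an edge iff `eta τ₁ τ₂ ≠ 0`), the degree function (`deg_X`, resp. `deg_Y`),
and local finiteness; the degree of a vertex `τ` in the graph is `mult * deg τ`. -/
structure GroverStructure (O : OrientedSet) where
  eta : O.K → O.K → ℝ
  eta_symm : ∀ τ₁ τ₂, eta τ₁ τ₂ = eta τ₂ τ₁
  eta_vals : ∀ τ₁ τ₂, eta τ₁ τ₂ = 0 ∨ eta τ₁ τ₂ = 1 ∨ eta τ₁ τ₂ = -1
  eta_bar_left : ∀ τ₁ τ₂, eta (O.bar τ₁) τ₂ = - eta τ₁ τ₂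
  eta_self : ∀ τ, eta τ τ = 0
  eta_bar_self : ∀ τ, eta τ (O.bar τ) = 0
  deg : O.K → ℕ
  deg_pos : ∀ τ, 0 < deg τ
  deg_bar : ∀ τ, deg (O.bar τ) = deg τ
  mult : ℕ
  nbhdFinite : ∀ τ, {τ' | eta τ τ' ≠ 0}.Finite
  nbhd_card : ∀ τ, (nbhdFinite τ).toFinset.card = mult * deg τ

namespace GroverStructure

variable {O : OrientedSet} (Y : GroverStructure O)

/-- `(τ₁, τ₂)` is an oriented edge of the up/down graph. -/
def Edge (τ₁ τ₂ : O.K) : Prop := Y.eta τ₁ τ₂ ≠ 0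

/-- The normalization constant `(mult * deg τ)^(-1/2)`. -/
noncomputable def c (τ : O.K) : ℂ := ((Real.sqrt (Y.mult * Y.deg τ) : ℝ) : ℂ)⁻¹

/-- The operator `d : ℓ²(E) → ℓ²(K)`; elements of `ℓ²(E)` are represented as
functions on `K × K` (supported on the set of edges). -/
noncomputable def d (g : O.K × O.K → ℂ) : O.K → ℂ :=
  fun τ => Y.c τ * ∑ᶠ τ' ∈ {τ' | Y.eta τ τ' ≠ 0}, g (τ, τ')

/-- The adjoint `d* : ℓ²(K) → ℓ²(E)`. -/
noncomputable def dstar (f : O.K → ℂ) : O.K × O.K → ℂ :=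
  fun p => if Y.eta p.1 p.2 ≠ 0 then Y.c p.1 * f p.1 else 0

/-- The shift operator `(S g)(τ₁,τ₂) = η(τ₁,τ₂) • g(τ₂,τ₁)`. -/
noncomputable def shift (g : O.K × O.K → ℂ) : O.K × O.K → ℂ :=
  fun p => (Y.eta p.1 p.2 : ℂ) * g (p.2, p.1)

/-- The discriminant operator `D = d ∘ S ∘ d*`. -/
noncomputable def disc (f : O.K → ℂ) : O.K → ℂ := Y.d (Y.shift (Y.dstar f))

/-- The Grover walk `U = S (2 d* d − I)`. -/
noncomputable def walk (g : O.K × O.K → ℂ) : O.K × O.K → ℂ :=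
  Y.shift (fun p => 2 * Y.dstar (Y.d g) p - g p)

/-- Membership in `ℓ²(E)`: square summable and supported on the edge set. -/
def MemEdge (g : O.K × O.K → ℂ) : Prop :=
  Memℓp g 2 ∧ ∀ p : O.K × O.K, ¬ Y.Edge p.1 p.2 → g p = 0

end GroverStructure

/-- The orthogonal projection of `ℓ²(K_q)` onto the cochain space
`C^q(K,ℂ) = {f : f(τ̄) = -f(τ)}`. -/
noncomputable def projC (O : OrientedSet) (f : O.K → ℂ) : O.K → ℂ :=
  fun τ => (f τ - f (O.bar τ)) / 2

lemma key_lemma (O : OrientedSet) (hne : Nonempty O.K) (Y : GroverStructure O)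
    (hm : 0 < Y.mult) (ε : ℂ) (hε : ε ^ 2 = -1) :
    ∃ φ : O.K × O.K → ℂ, Y.MemEdge φ ∧ φ ≠ 0 ∧ Y.walk φ = fun p => (-ε) * φ p := by
  classical
  obtain ⟨τ₀⟩ := hne
  -- positivity facts
  have hdegpos : ∀ τ : O.K, (0:ℝ) < (Y.mult : ℝ) * (Y.deg τ : ℝ) := by
    intro τ
    have := Y.deg_pos τ
    positivity
  have hc_ne : ∀ τ, Y.c τ ≠ 0 := by
    intro τ
    simp only [GroverStructure.c, ne_eq, inv_eq_zero, Complex.ofReal_eq_zero]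
    exact (Real.sqrt_pos.2 (hdegpos τ)).ne'
  have hc_bar : ∀ τ, Y.c (O.bar τ) = Y.c τ := by
    intro τ; simp [GroverStructure.c, Y.deg_bar]
  have hc_sq : ∀ τ, Y.c τ * Y.c τ * ((Y.mult : ℂ) * (Y.deg τ : ℂ)) = 1 := by
    intro τ
    have h : (Real.sqrt ((Y.mult : ℝ) * (Y.deg τ : ℝ)))⁻¹ *
        (Real.sqrt ((Y.mult : ℝ) * (Y.deg τ : ℝ)))⁻¹ * ((Y.mult : ℝ) * (Y.deg τ : ℝ)) = 1 := by
      rw [← mul_inv]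
      rw [Real.mul_self_sqrt (hdegpos τ).le]
      exact inv_mul_cancel₀ (hdegpos τ).ne'
    have := congrArg (fun x : ℝ => (x : ℂ)) h
    push_cast at this
    simpa [GroverStructure.c] using this
  -- the symmetric function f
  set f : O.K → ℂ := fun τ => if τ = τ₀ ∨ τ = O.bar τ₀ then 1 else 0 with hf_def
  have hbar_iff : ∀ τ : O.K, (O.bar τ = τ₀ ∨ O.bar τ = O.bar τ₀) ↔ (τ = τ₀ ∨ τ = O.bar τ₀) := by
    intro τ
    constructor
    · rintro (h | h)
      · right; rw [← h, O.bar_invol]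
      · left
        have := congrArg O.bar h
        rwa [O.bar_invol, O.bar_invol] at this
    · rintro (h | h)
      · right; rw [h]
      · left; rw [h, O.bar_invol]
  have hf_symm : ∀ τ, f (O.bar τ) = f τ := by
    intro τ
    simp only [hf_def]
    by_cases h : τ = τ₀ ∨ τ = O.bar τ₀
    · rw [if_pos ((hbar_iff τ).2 h), if_pos h]
    · rw [if_neg (fun hh => h ((hbar_iff τ).1 hh)), if_neg h]
  set a : O.K × O.K → ℂ := Y.dstar f with ha_def
  set b : O.K × O.K → ℂ := Y.shift a with hb_def
  -- d written as a finite sum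
  have hd : ∀ (g : O.K × O.K → ℂ) τ,
      Y.d g τ = Y.c τ * ∑ τ' ∈ (Y.nbhdFinite τ).toFinset, g (τ, τ') := by
    intro g τ
    rw [GroverStructure.d, ← finsum_mem_coe_finset, Set.Finite.coe_toFinset]
  -- d a = f
  have hda : Y.d a = f := by
    funext τ
    rw [hd]
    have hsum : ∑ τ' ∈ (Y.nbhdFinite τ).toFinset, a (τ, τ')
        = ∑ τ' ∈ (Y.nbhdFinite τ).toFinset, Y.c τ * f τ := by
      apply Finset.sum_congr rfl
      intro τ' hτ'
      rw [Set.Finite.mem_toFinset, Set.mem_setOf_eq] at hτ'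
      simp only [ha_def, GroverStructure.dstar]
      rw [if_pos hτ']
    rw [hsum, Finset.sum_const, Y.nbhd_card, nsmul_eq_mul]
    push_cast
    linear_combination (f τ) * hc_sq τ
  -- d b = 0
  have hdb : Y.d b = 0 := by
    funext τ
    rw [hd]
    have hsum : ∑ τ' ∈ (Y.nbhdFinite τ).toFinset, b (τ, τ')
        = ∑ τ' ∈ (Y.nbhdFinite τ).toFinset, (Y.eta τ τ' : ℂ) * (Y.c τ' * f τ') := by
      apply Finset.sum_congr rfl
      intro τ' hτ'
      rw [Set.Finite.mem_toFinset, Set.mem_setOf_eq] at hτ'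
      simp only [hb_def, GroverStructure.shift, ha_def, GroverStructure.dstar]
      rw [if_pos (by rw [Y.eta_symm]; exact hτ')]
    rw [hsum]
    set F : O.K → ℂ := fun τ' => (Y.eta τ τ' : ℂ) * (Y.c τ' * f τ') with hF_def
    have hFbar : ∀ τ', F (O.bar τ') = - F τ' := by
      intro τ'
      simp only [hF_def]
      have h1 : Y.eta τ (O.bar τ') = - Y.eta τ τ' := by
        rw [Y.eta_symm, Y.eta_bar_left, Y.eta_symm]
      rw [h1, hc_bar, hf_symm]
      push_cast
      ring
    have hmem : ∀ τ', τ' ∈ (Y.nbhdFinite τ).toFinset ↔ O.bar τ' ∈ (Y.nbhdFinite τ).toFinset := by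
      intro τ'
      simp only [Set.Finite.mem_toFinset, Set.mem_setOf_eq]
      have h1 : Y.eta τ (O.bar τ') = - Y.eta τ τ' := by
        rw [Y.eta_symm, Y.eta_bar_left, Y.eta_symm]
      rw [h1]
      simp
    have hswap : ∑ τ' ∈ (Y.nbhdFinite τ).toFinset, F τ'
        = ∑ τ' ∈ (Y.nbhdFinite τ).toFinset, F (O.bar τ') := by
      apply Finset.sum_nbij' (fun τ' => O.bar τ') (fun τ' => O.bar τ')
      · intro x hx; exact (hmem x).1 hx
      · intro x hx; exact (hmem x).1 hx
      · intro x _; exact O.bar_invol x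
      · intro x _; exact O.bar_invol x
      · intro x _; rw [O.bar_invol]
    have : ∑ τ' ∈ (Y.nbhdFinite τ).toFinset, F τ'
        = - ∑ τ' ∈ (Y.nbhdFinite τ).toFinset, F τ' := by
      conv_lhs => rw [hswap]
      rw [← Finset.sum_neg_distrib]
      exact Finset.sum_congr rfl fun x _ => hFbar x
    have h0 : ∑ τ' ∈ (Y.nbhdFinite τ).toFinset, F τ' = 0 := by
      have := add_eq_zero_iff_eq_neg.2 this
      linear_combination this / 2
    rw [h0]
    simp
  -- shift b = a
  have hSb : Y.shift b = a := by
    funext p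
    simp only [GroverStructure.shift, hb_def]
    by_cases h : Y.eta p.1 p.2 = 0
    · simp only [h, Complex.ofReal_zero, zero_mul]
      simp only [ha_def, GroverStructure.dstar]
      rw [if_neg (by simp [h])]
    · have h2 : Y.eta p.2 p.1 = Y.eta p.1 p.2 := Y.eta_symm p.2 p.1
      have : ((p.2, p.1).2, (p.2, p.1).1) = p := rfl
      rw [this, h2]
      rcases Y.eta_vals p.1 p.2 with h' | h' | h'
      · exact absurd h' h
      · rw [h']; push_cast; ring
      · rw [h']; push_cast; ring
  -- walk a = b
  have hwa : Y.walk a = b := by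
    have : (fun p => 2 * Y.dstar (Y.d a) p - a p) = a := by
      funext p
      rw [hda]
      show 2 * a p - a p = a p
      ring
    rw [GroverStructure.walk, this]
  -- walk b = -a
  have hwb : Y.walk b = fun p => - a p := by
    have h1 : (fun p => 2 * Y.dstar (Y.d b) p - b p) = fun p => - b p := by
      funext p
      rw [hdb]
      have : Y.dstar (0 : O.K → ℂ) p = 0 := by
        simp only [GroverStructure.dstar, Pi.zero_apply, mul_zero, ite_self]
      rw [this]
      ring
    rw [GroverStructure.walk, h1]
    funext p
    have : Y.shift (fun p => - b p) p = - Y.shift b p := by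
      simp only [GroverStructure.shift]; ring
    rw [this, hSb]
  -- the eigenvector
  set φ : O.K × O.K → ℂ := fun p => a p + ε * b p with hφ_def
  have hdφ : Y.d φ = f := by
    funext τ
    rw [hd]
    have : ∑ τ' ∈ (Y.nbhdFinite τ).toFinset, φ (τ, τ')
        = (∑ τ' ∈ (Y.nbhdFinite τ).toFinset, a (τ, τ'))
          + ε * ∑ τ' ∈ (Y.nbhdFinite τ).toFinset, b (τ, τ') := by
      rw [Finset.mul_sum, ← Finset.sum_add_distrib]
    rw [this]
    have ha' : Y.c τ * ∑ τ' ∈ (Y.nbhdFinite τ).toFinset, a (τ, τ') = f τ := by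
      rw [← hd, hda]
    have hb' : Y.c τ * ∑ τ' ∈ (Y.nbhdFinite τ).toFinset, b (τ, τ') = 0 := by
      rw [← hd, hdb]; rfl
    linear_combination ha' + ε * hb'
  have hwφ : Y.walk φ = fun p => (-ε) * φ p := by
    funext p
    rw [GroverStructure.walk]
    have h1 : (fun p => 2 * Y.dstar (Y.d φ) p - φ p) = fun p => a p - ε * b p := by
      funext p
      rw [hdφ]
      show 2 * a p - (a p + ε * b p) = a p - ε * b p
      ring
    rw [h1]
    have h2 : Y.shift (fun p => a p - ε * b p) p = Y.shift a p - ε * Y.shift b p := by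
      simp only [GroverStructure.shift]; ring
    rw [h2, hSb, ← hb_def]
    show b p - ε * a p = -ε * (a p + ε * b p)
    have : ε * ε = -1 := by rw [← sq]; exact hε
    linear_combination (b p) * this
  -- φ is nonzero
  obtain ⟨τ', hτ'⟩ : ∃ τ', Y.eta τ₀ τ' ≠ 0 := by
    have hcard : 0 < (Y.nbhdFinite τ₀).toFinset.card := by
      rw [Y.nbhd_card]
      exact Nat.mul_pos hm (Y.deg_pos τ₀)
    obtain ⟨x, hx⟩ := Finset.card_pos.1 hcard
    rw [Set.Finite.mem_toFinset] at hx
    exact ⟨x, hx⟩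
  have hτ'ne : ¬ (τ' = τ₀ ∨ τ' = O.bar τ₀) := by
    rintro (h | h)
    · rw [h] at hτ'; exact hτ' (Y.eta_self τ₀)
    · rw [h] at hτ'; exact hτ' (Y.eta_bar_self τ₀)
  have hφval : φ (τ₀, τ') = Y.c τ₀ := by
    simp only [hφ_def, ha_def, hb_def, GroverStructure.dstar, GroverStructure.shift]
    rw [if_pos hτ']
    have hf1 : f τ₀ = 1 := by simp [hf_def]
    have hf0 : f τ' = 0 := by simp only [hf_def]; rw [if_neg hτ'ne]
    have : (if Y.eta τ' τ₀ ≠ 0 then Y.c τ' * f τ' else 0) = 0 := by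
      rw [hf0]; simp
    rw [this, hf1]
    ring
  have hφne : φ ≠ 0 := by
    intro h
    have := congrFun h (τ₀, τ')
    rw [hφval] at this
    exact hc_ne τ₀ this
  -- MemEdge
  have hsupp_a : ∀ p : O.K × O.K, a p ≠ 0 → (p.1 = τ₀ ∨ p.1 = O.bar τ₀) ∧ Y.eta p.1 p.2 ≠ 0 := by
    intro p hp
    simp only [ha_def, GroverStructure.dstar] at hp
    by_cases h : Y.eta p.1 p.2 ≠ 0
    · refine ⟨?_, h⟩
      rw [if_pos h] at hp
      by_contra hcon
      have : f p.1 = 0 := by simp only [hf_def]; rw [if_neg hcon]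
      rw [this, mul_zero] at hp
      exact hp rfl
    · rw [if_neg h] at hp; exact absurd rfl hp
  have hedge : ∀ p : O.K × O.K, ¬ Y.Edge p.1 p.2 → φ p = 0 := by
    intro p hp
    rw [GroverStructure.Edge, not_not] at hp
    have ha0 : a p = 0 := by
      by_contra h
      exact (hsupp_a p h).2 hp
    have hb0 : b p = 0 := by
      simp only [hb_def, GroverStructure.shift, hp]
      simp
    simp [hφ_def, ha0, hb0]
  -- finite support ⟹ Memℓp
  have hmem2 : Memℓp φ 2 := by
    set T : Finset O.K :=
      (Y.nbhdFinite τ₀).toFinset ∪ (Y.nbhdFinite (O.bar τ₀)).toFinset with hT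
    set V : Finset O.K := {τ₀, O.bar τ₀} with hV
    set s : Finset (O.K × O.K) := V ×ˢ T ∪ T ×ˢ V with hs
    apply memℓp_gen
    apply summable_of_ne_finset_zero (s := s)
    intro p hp
    have hφ0 : φ p = 0 := by
      by_contra h
      have hab : a p ≠ 0 ∨ b p ≠ 0 := by
        by_contra hcon
        push_neg at hcon
        apply h
        simp [hφ_def, hcon.1, hcon.2]
      apply hp
      rcases hab with h' | h'
      · obtain ⟨h1, h2⟩ := hsupp_a p h'
        apply Finset.mem_union_left
        rw [Finset.mem_product]
        constructor
        · simp [hV]; exact h1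
        · rcases h1 with h1 | h1
          · apply Finset.mem_union_left
            rw [Set.Finite.mem_toFinset]
            rw [h1] at h2; exact h2
          · apply Finset.mem_union_right
            rw [Set.Finite.mem_toFinset]
            rw [h1] at h2; exact h2
      · have hswap : a (p.2, p.1) ≠ 0 := by
          intro hcon
          apply h'
          simp [hb_def, GroverStructure.shift, hcon]
        obtain ⟨h1, h2⟩ := hsupp_a _ hswap
        simp only at h1 h2
        apply Finset.mem_union_right
        rw [Finset.mem_product]
        constructor
        · rcases h1 with h1 | h1
          · apply Finset.mem_union_left
            rw [Set.Finite.mem_toFinset]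
            rw [h1] at h2
            show p.1 ∈ _
            rw [Set.mem_setOf_eq]
            exact h2
          · apply Finset.mem_union_right
            rw [Set.Finite.mem_toFinset]
            rw [h1] at h2
            show p.1 ∈ _
            rw [Set.mem_setOf_eq]
            exact h2
        · simp [hV]; exact h1
    rw [hφ0]
    simp only [norm_zero]
    rw [Real.zero_rpow]
    norm_num
  exact ⟨φ, ⟨hmem2, hedge⟩, hφne, hwφ⟩

/-- Both `i` and `-i` are eigenvalues of the up-Grover walk
`U_q^up = S^up (2 d_{X_q}* d_{X_q} - I)` on `ℓ²(E(X_q))`, and both `i` and `-i` are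
eigenvalues of the down-Grover walk `U_q^down = S^down (2 d_{Y_q}* d_{Y_q} - I)`
on `ℓ²(E(Y_q))`. -/
theorem up_down_walks_have_eigenvalues_pm_I (O : OrientedSet) (q : ℕ) (hne : Nonempty O.K)
    (X : GroverStructure O) (hXup : X.mult = 2 * (q + 1))
    (Y : GroverStructure O) (hYdown : Y.mult = 2) :
    (∃ φ : O.K × O.K → ℂ, X.MemEdge φ ∧ φ ≠ 0 ∧ X.walk φ = fun p => Complex.I * φ p) ∧
    (∃ φ : O.K × O.K → ℂ, X.MemEdge φ ∧ φ ≠ 0 ∧ X.walk φ = fun p => - Complex.I * φ p) ∧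
    (∃ φ : O.K × O.K → ℂ, Y.MemEdge φ ∧ φ ≠ 0 ∧ Y.walk φ = fun p => Complex.I * φ p) ∧
    (∃ φ : O.K × O.K → ℂ, Y.MemEdge φ ∧ φ ≠ 0 ∧ Y.walk φ = fun p => - Complex.I * φ p) := by
  
  have hmX : 0 < X.mult := by rw [hXup]; positivity
  have hmY : 0 < Y.mult := by rw [hYdown]; norm_num
  have hI : (Complex.I) ^ 2 = -1 := Complex.I_sq
  have hnI : (-Complex.I) ^ 2 = -1 := by rw [neg_pow]; simp [Complex.I_sq]
  refine ⟨?_, ?_, ?_, ?_⟩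
  · obtain ⟨φ, h1, h2, h3⟩ := key_lemma O hne X hmX (-Complex.I) hnI
    exact ⟨φ, h1, h2, by simpa using h3⟩
  · obtain ⟨φ, h1, h2, h3⟩ := key_lemma O hne X hmX Complex.I hI
    exact ⟨φ, h1, h2, h3⟩
  · obtain ⟨φ, h1, h2, h3⟩ := key_lemma O hne Y hmY (-Complex.I) hnI
    exact ⟨φ, h1, h2, by simpa using h3⟩
  · obtain ⟨φ, h1, h2, h3⟩ := key_lemma O hne Y hmY Complex.I hI
    exact ⟨φ, h1, h2, h3⟩
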